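/- The function γ_Ω, extended to the diagonal by γ_Ω(x,x) := γ̃_Ω(x), is differentiable in its first variable on Ω × Ω, and for every x ∈ Ω one has ∇γ̃_Ω(x) = 2·∇₁γ_Ω(x,x), where ∇₁γ_Ω(x,x) denotes the gradient of the extended function in the first variable evaluated on the diagonal. -/

import Mathlib

open Complex Real

noncomputable section

/-- The gradient of a real-valued function on `ℂ ≅ ℝ²`, identified with the complex
number `∂₁ f + i·∂₂ f`. -/
def grad (f : ℂ → ℝ) (x : ℂ) : ℂ :=
  (fderiv ℝ f x 1 : ℂ) + (fderiv ℝ f x Complex.I : ℂ) * Complex.I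

/-- The regular part of the Green's function of `Ω`, expressed through the conformal map `φ`. -/
def gammaReg (φ : ℂ → ℂ) (x y : ℂ) : ℝ :=
  (1 / (2 * π)) * Real.log (‖φ x - φ y‖ / ‖x - y‖) -
    (1 / (2 * π)) * Real.log (‖1 - φ x * (starRingEnd ℂ) (φ y)‖)

/-- The Robin function of `Ω`. -/
def robin (φ : ℂ → ℂ) (x : ℂ) : ℝ :=
  (1 / (2 * π)) * Real.log (‖deriv φ x‖) -
    (1 / (2 * π)) * Real.log (1 - ‖φ x‖ ^ 2)

/-- The right-hand side of the Kirchhoff–Routh equation for the vortex located at `w₁`,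
with own strength `a₁`, the other vortex being at `w₂` with strength `a₂`. -/
def vortexRHS (φ : ℂ → ℂ) (a₁ a₂ : ℝ) (w₁ w₂ : ℂ) : ℂ :=
  ((a₁ : ℂ) / 2) * (Complex.I * grad (robin φ) w₁) +
    (a₂ : ℂ) * (Complex.I * (w₁ - w₂) / ((2 * π * ‖w₁ - w₂‖ ^ 2 : ℝ) : ℂ) +
      Complex.I * grad (fun x => gammaReg φ x w₂) w₁)

/-- The regular part of the Green's function, extended to the diagonal by the Robin function. -/
def gammaExt (φ : ℂ → ℂ) (x y : ℂ) : ℝ :=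
  if x = y then robin φ x else gammaReg φ x y

/-! ### Auxiliary machinery -/

open Filter Topology

/-- The real-linear map `v ↦ (w * v).re` on `ℂ`. -/
def Lmap (w : ℂ) : ℂ →L[ℝ] ℝ := Complex.reCLM.comp (w • (1 : ℂ →L[ℝ] ℂ))

@[simp] lemma Lmap_apply (w v : ℂ) : Lmap w v = (w * v).re := rfl

lemma grad_eq {f : ℂ → ℝ} {x w : ℂ} (hf : HasFDerivAt f (Lmap w) x) :
    grad f x = (starRingEnd ℂ) w := by
  rw [grad, hf.fderiv]
  simp [Complex.ext_iff]

lemma hasFDerivAt_log_abs {h : ℂ → ℂ} {h' x : ℂ} (hh : HasDerivAt h h' x) (h0 : h x ≠ 0) :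
    HasFDerivAt (fun z => Real.log (‖h z‖)) (Lmap (h' / h x)) x := by
  set c : ℂ := (starRingEnd ℂ) (h x) / (‖h x‖ : ℂ) with hc
  have hcabs : ‖c‖ = 1 := by
    simp [hc, norm_div, Complex.norm_conj, div_self (norm_ne_zero_iff.mpr h0)]
  have hc0 : c ≠ 0 := by
    intro h'; rw [h', norm_zero] at hcabs; norm_num at hcabs
  have hchx : c * h x = (‖h x‖ : ℂ) := by
    rw [hc, div_mul_eq_mul_div, Complex.conj_mul', sq, mul_div_assoc,
      div_self (Complex.ofReal_ne_zero.2 (norm_ne_zero_iff.mpr h0)), mul_one]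
  have hmem : c * h x ∈ Complex.slitPlane := by
    rw [hchx]; exact Or.inl (by simpa using norm_pos_iff.mpr h0)
  have hgd : HasDerivAt (fun z => Complex.log (c * h z)) ((c * h x)⁻¹ * (c * h')) x :=
    by have := (Complex.hasDerivAt_log hmem).comp x ((hh.const_mul c)); exact this
  have hD : (c * h x)⁻¹ * (c * h') = h' / h x := by
    field_simp [hc0, h0]
  rw [hD] at hgd
  have heq : (fun z => Real.log (‖h z‖)) =
      fun z => (Complex.log (c * h z)).re := by
    funext z
    rw [Complex.log_re, norm_mul, hcabs, one_mul]
  rw [heq]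
  have := (Complex.reCLM.hasFDerivAt (x := Complex.log (c * h x))).comp x
      (hgd.hasFDerivAt.restrictScalars ℝ)
  convert! this using 1
  ext v
  simp [mul_comm]

lemma hasFDerivAt_log_one_sub_sq_abs {h : ℂ → ℂ} {h' x : ℂ} (hh : HasDerivAt h h' x)
    (h1 : ‖h x‖ < 1) :
    HasFDerivAt (fun z => Real.log (1 - ‖h z‖ ^ 2))
      (Lmap ((1 - ‖h x‖ ^ 2 : ℝ)⁻¹ • (-2 * (starRingEnd ℂ) (h x) * h'))) x := by
  have hpos : (0:ℝ) < 1 - ‖h x‖ ^ 2 := by nlinarith [norm_nonneg (h x)]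
  have hD : HasFDerivAt h
      ((ContinuousLinearMap.smulRight (1 : ℂ →L[ℂ] ℂ) h').restrictScalars ℝ) x :=
    hh.hasFDerivAt.restrictScalars ℝ
  set D := (ContinuousLinearMap.smulRight (1 : ℂ →L[ℂ] ℂ) h').restrictScalars ℝ with hDdef
  have hre : HasFDerivAt (fun z => (h z).re) (Complex.reCLM.comp D) x :=
    (Complex.reCLM.hasFDerivAt).comp x hD
  have him : HasFDerivAt (fun z => (h z).im) (Complex.imCLM.comp D) x :=
    (Complex.imCLM.hasFDerivAt).comp x hD
  have hinner : HasFDerivAt (fun z => 1 - ((h z).re * (h z).re + (h z).im * (h z).im))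
      (-(((h x).re • (Complex.reCLM.comp D) + (h x).re • (Complex.reCLM.comp D)) +
         ((h x).im • (Complex.imCLM.comp D) + (h x).im • (Complex.imCLM.comp D)))) x :=
    ((hre.mul hre).add (him.mul him)).const_sub 1
  have habs : ∀ z : ℂ, 1 - ‖h z‖ ^ 2
      = 1 - ((h z).re * (h z).re + (h z).im * (h z).im) := by
    intro z
    rw [Complex.sq_norm, Complex.normSq_apply]
  have hval : 1 - ((h x).re * (h x).re + (h x).im * (h x).im) ≠ 0 := by
    rw [← habs x]; exact ne_of_gt hpos
  have hlog := (Real.hasDerivAt_log hval).comp_hasFDerivAt x hinner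
  simp only [habs]
  convert! hlog using 1
  ext v
  have hDv : D v = v * h' := by
    simp [hDdef, smul_eq_mul]
  simp only [Lmap_apply, ContinuousLinearMap.coe_smul', Pi.smul_apply,
    ContinuousLinearMap.neg_apply, ContinuousLinearMap.add_apply,
    ContinuousLinearMap.coe_comp', Function.comp_apply, Complex.reCLM_apply, Complex.imCLM_apply,
    smul_eq_mul, hDv]
  rw [smul_mul_assoc, Complex.smul_re]
  simp only [Complex.mul_re, Complex.mul_im, Complex.conj_re, Complex.conj_im,
    Complex.neg_re, Complex.neg_im, Complex.re_ofNat, Complex.im_ofNat, smul_eq_mul]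
  ring

lemma hasFDerivAt_combo {f g : ℂ → ℝ} {a b x : ℂ} (c : ℝ)
    (hf : HasFDerivAt f (Lmap a) x) (hg : HasFDerivAt g (Lmap b) x) :
    HasFDerivAt (fun z => c * f z - c * g z) (Lmap (c • (a - b))) x := by
  have := (hf.const_mul c).sub (hg.const_mul c)
  convert! this using 1
  ext v
  simp only [Lmap_apply, ContinuousLinearMap.sub_apply, ContinuousLinearMap.coe_smul',
    Pi.smul_apply, smul_eq_mul, smul_mul_assoc, Complex.smul_re, sub_mul, Complex.sub_re]
  ring

lemma deriv_ne_zero_of_injOn {Ω : Set ℂ} {φ : ℂ → ℂ} {x : ℂ} (hopen : IsOpen Ω)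
    (hdiff : DifferentiableOn ℂ φ Ω) (hinj : Set.InjOn φ Ω) (hx : x ∈ Ω) :
    deriv φ x ≠ 0 := by
  intro d0
  have hΩx : Ω ∈ 𝓝 x := hopen.mem_nhds hx
  have hφa : AnalyticAt ℂ φ x := hdiff.analyticAt hΩx
  have hfa : AnalyticAt ℂ (fun z => φ z - φ x) x := hφa.sub analyticAt_const
  have hnz : ¬ (∀ᶠ z in 𝓝 x, φ z - φ x = 0) := by
    intro hev
    have h1 : ∀ᶠ z in 𝓝[≠] x, (φ z - φ x = 0 ∧ z ∈ Ω) ∧ z ≠ x :=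
      (((hev.and (hopen.eventually_mem hx)).filter_mono nhdsWithin_le_nhds).and
        self_mem_nhdsWithin)
    obtain ⟨z, ⟨hz0, hzΩ⟩, hzx⟩ := h1.exists
    exact hzx (hinj hzΩ hx (by linear_combination hz0))
  have hord : analyticOrderAt (fun z => φ z - φ x) x ≠ ⊤ := fun h => hnz (analyticOrderAt_eq_top.1 h)
  set n : ℕ := (analyticOrderAt (fun z => φ z - φ x) x).toNat with hndef
  have hn : analyticOrderAt (fun z => φ z - φ x) x = n := (ENat.coe_toNat hord).symm
  obtain ⟨g, hga, hg0, hev⟩ := (hfa.analyticOrderAt_eq_natCast (n := n)).1 hn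
  have hn0 : n ≠ 0 := by
    intro h0
    have := hev.self_of_nhds
    rw [h0] at this
    simp at this
    exact hg0 this.symm
  have hn1 : n ≠ 1 := by
    intro h1
    have hd1 : deriv (fun z => φ z - φ x) x = deriv φ x := by
      simp [deriv_sub_const]
    have hd2 : deriv (fun z => φ z - φ x) x = g x := by
      have heq : (fun z => φ z - φ x) =ᶠ[𝓝 x] fun z => (z - x) * g z := by
        filter_upwards [hev] with z hz
        rw [hz, h1]
        simp [smul_eq_mul]
      rw [heq.deriv_eq]
      have hgd : HasDerivAt g (deriv g x) x := hga.differentiableAt.hasDerivAt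
      have := ((hasDerivAt_id x).sub_const x).mul hgd
      have h2 := this.deriv
      simpa only [id_eq, Pi.mul_def, sub_self, zero_mul, add_zero, one_mul] using h2
    rw [hd1, d0] at hd2
    exact hg0 hd2.symm
  have hn2 : 2 ≤ n := by omega
  have hnC : (n : ℂ) ≠ 0 := Nat.cast_ne_zero.2 hn0
  set c : ℂ := g x with hcdef
  have hm1 : g x * c⁻¹ ∈ Complex.slitPlane := by
    rw [← hcdef, mul_inv_cancel₀ hg0]
    exact Complex.one_mem_slitPlane
  have hga2 : AnalyticAt ℂ (fun z => g z * c⁻¹) x := hga.mul analyticAt_const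
  have hlogA : AnalyticAt ℂ (fun z => Complex.log (g z * c⁻¹)) x :=
    hga2.clog hm1
  set r : ℂ → ℂ := fun z => Complex.exp ((Complex.log c + Complex.log (g z * c⁻¹)) * (n : ℂ)⁻¹)
    with hrdef
  have hrA : AnalyticAt ℂ r x :=
    ((analyticAt_const.add hlogA).mul analyticAt_const).cexp
  have hr0 : r x ≠ 0 := Complex.exp_ne_zero _
  have hrn : ∀ᶠ z in 𝓝 x, r z ^ n = g z := by
    filter_upwards [hga.continuousAt.eventually_ne hg0] with z hgz
    rw [hrdef]
    simp only
    rw [← Complex.exp_nat_mul]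
    have harg : (n : ℂ) * ((Complex.log c + Complex.log (g z * c⁻¹)) * (n : ℂ)⁻¹)
        = Complex.log c + Complex.log (g z * c⁻¹) := by
      field_simp
    rw [harg, Complex.exp_add, Complex.exp_log hg0, Complex.exp_log (by
      exact mul_ne_zero hgz (inv_ne_zero hg0))]
    field_simp
  set F : ℂ → ℂ := fun z => (z - x) * r z with hFdef
  have hFa : AnalyticAt ℂ F x := (analyticAt_id.sub analyticAt_const).mul hrA
  have hFd : HasDerivAt F (r x) x := by
    have := ((hasDerivAt_id x).sub_const x).mul (hrA.differentiableAt.hasDerivAt)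
    simpa only [id_eq, Pi.mul_def, sub_self, zero_mul, add_zero, one_mul] using this
  obtain ⟨p, hp⟩ := hFa
  have hFs : HasStrictDerivAt F (r x) x := by
    have h1 := hp.hasStrictDerivAt
    have h2 : r x = p.coeff 1 := hFd.unique hp.hasDerivAt
    rw [h2]
    exact h1
  have hmap : Filter.map F (𝓝 x) = 𝓝 0 := by
    have := hFs.map_nhds_eq hr0
    simpa [hFdef] using this
  have hUev : ∀ᶠ z in 𝓝 x, z ∈ Ω ∧ φ z - φ x = F z ^ n := by
    filter_upwards [hopen.eventually_mem hx, hev, hrn] with z h1 h2 h3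
    refine ⟨h1, ?_⟩
    rw [h2, hFdef]
    simp only [smul_eq_mul, mul_pow]
    rw [h3]
  set U : Set ℂ := {z | z ∈ Ω ∧ φ z - φ x = F z ^ n} with hUdef
  have hUx : U ∈ 𝓝 x := hUev
  have himg : F '' U ∈ 𝓝 (0 : ℂ) := by
    rw [← hmap, Filter.mem_map]
    exact Filter.mem_of_superset hUx (Set.subset_preimage_image F U)
  obtain ⟨ε, hε, hball⟩ := Metric.mem_nhds_iff.1 himg
  set w : ℂ := ((ε / 2 : ℝ) : ℂ) with hwdef
  have hw0 : w ≠ 0 := by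
    simp [hwdef, Complex.ofReal_ne_zero]
    positivity
  have hwabs : ‖w‖ = ε / 2 := by
    rw [hwdef, Complex.norm_real, Real.norm_eq_abs, abs_of_pos (by positivity)]
  set ζ : ℂ := Complex.exp (((2 * π / n : ℝ) : ℂ) * Complex.I) with hζdef
  have hζabs : ‖ζ‖ = 1 := Complex.norm_exp_ofReal_mul_I _
  have hζn : ζ ^ n = 1 := by
    rw [hζdef, ← Complex.exp_nat_mul]
    have : (n : ℂ) * (((2 * π / n : ℝ) : ℂ) * Complex.I) = 2 * π * Complex.I := by
      push_cast
      field_simp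
    rw [this, Complex.exp_two_pi_mul_I]
  have hζ1 : ζ ≠ 1 := by
    rw [hζdef]
    intro h
    obtain ⟨k, hk⟩ := Complex.exp_eq_one_iff.1 h
    have him := congrArg Complex.im hk
    simp [Complex.mul_im, Complex.mul_re] at him
    have hπ : (0:ℝ) < π := Real.pi_pos
    have hnR : (n:ℝ) ≠ 0 := Nat.cast_ne_zero.2 hn0
    field_simp [hnR] at him
    have h1 : (2*π) * 1 = (2*π) * ((k:ℝ) * n) := by linear_combination (2*π) * him
    have h2 : (1:ℝ) = (k:ℝ) * n := mul_left_cancel₀ (by positivity) h1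
    have h3 : (k * n : ℤ) = 1 := by exact_mod_cast h2.symm
    have h4 : ((n:ℤ)) ∣ 1 := ⟨k, by linear_combination - h3⟩
    have h5 := Int.le_of_dvd one_pos h4
    have h6 : (2:ℤ) ≤ (n:ℤ) := by exact_mod_cast hn2
    omega
  have hwmem : w ∈ F '' U := hball (by simp [Metric.mem_ball, hwabs]; linarith)
  have hζwmem : ζ * w ∈ F '' U := by
    apply hball
    simp only [Metric.mem_ball, dist_zero_right, norm_mul, hζabs, one_mul,
      hwabs]
    linarith
  obtain ⟨z₁, hz₁U, hz₁⟩ := hwmem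
  obtain ⟨z₂, hz₂U, hz₂⟩ := hζwmem
  have hφeq : φ z₁ = φ z₂ := by
    have e1 : φ z₁ - φ x = w ^ n := by rw [hz₁U.2, hz₁]
    have e2 : φ z₂ - φ x = w ^ n := by rw [hz₂U.2, hz₂, mul_pow, hζn, one_mul]
    linear_combination e1 - e2
  have hz12 : z₁ = z₂ := hinj hz₁U.1 hz₂U.1 hφeq
  rw [hz12, hz₂] at hz₁
  have : (ζ - 1) * w = 0 := by linear_combination hz₁
  rcases mul_eq_zero.1 this with h | h
  · exact hζ1 (by linear_combination h)
  · exact hw0 h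

lemma dslope_diffOn {Ω : Set ℂ} {φ : ℂ → ℂ} {y : ℂ} (hopen : IsOpen Ω)
    (hdiff : DifferentiableOn ℂ φ Ω) (hy : y ∈ Ω) :
    DifferentiableOn ℂ (dslope φ y) Ω := by
  intro z hz
  rcases eq_or_ne z y with rfl | hne
  · obtain ⟨p, hp⟩ := hdiff.analyticAt (hopen.mem_nhds hz)
    exact (hp.has_fpower_series_dslope_fslope.analyticAt).differentiableAt.differentiableWithinAt
  · exact ((differentiableAt_dslope_of_ne hne).2
      (hdiff.differentiableAt (hopen.mem_nhds hz))).differentiableWithinAt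

lemma deriv_deriv_eq_two_mul {Ω : Set ℂ} {φ : ℂ → ℂ} {x : ℂ} (hopen : IsOpen Ω)
    (hdiff : DifferentiableOn ℂ φ Ω) (hx : x ∈ Ω) :
    deriv (deriv φ) x = 2 * deriv (dslope φ x) x := by
  set ψ := dslope φ x with hψdef
  have hψΩ : DifferentiableOn ℂ ψ Ω := dslope_diffOn hopen hdiff hx
  have hψa : AnalyticOnNhd ℂ ψ Ω := hψΩ.analyticOnNhd hopen
  have hψ'a : AnalyticOnNhd ℂ (deriv ψ) Ω := hψa.deriv
  have heq : ∀ z ∈ Ω, deriv φ z = ψ z + (z - x) * deriv ψ z := by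
    intro z hz
    have hψz : HasDerivAt ψ (deriv ψ z) z :=
      (hψΩ.differentiableAt (hopen.mem_nhds hz)).hasDerivAt
    have hφid : φ = fun w => φ x + (w - x) * ψ w := by
      funext w
      have := sub_smul_dslope φ x w
      rw [smul_eq_mul] at this
      have h2 : ψ w = dslope φ x w := rfl
      rw [h2]
      linear_combination -this
    have hD : HasDerivAt (fun w => φ x + (w - x) * ψ w)
        (1 * ψ z + (z - x) * deriv ψ z) z :=
      (((hasDerivAt_id z).sub_const x).mul hψz).const_add (φ x)
    rw [hφid]
    rw [hD.deriv]
    ring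
  have hev : deriv φ =ᶠ[𝓝 x] fun z => ψ z + (z - x) * deriv ψ z := by
    filter_upwards [hopen.eventually_mem hx] with z hz using heq z hz
  rw [hev.deriv_eq]
  have hψx : HasDerivAt ψ (deriv ψ x) x :=
    (hψΩ.differentiableAt (hopen.mem_nhds hx)).hasDerivAt
  have hψ'x : HasDerivAt (deriv ψ) (deriv (deriv ψ) x) x :=
    (hψ'a x hx).differentiableAt.hasDerivAt
  have hD2 : HasDerivAt (fun z => ψ z + (z - x) * deriv ψ z)
      (deriv ψ x + (1 * deriv ψ x + (x - x) * deriv (deriv ψ) x)) x :=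
    hψx.add (((hasDerivAt_id x).sub_const x).mul hψ'x)
  rw [hD2.deriv]
  ring

lemma gammaExt_eq (φ : ℂ → ℂ) (x y : ℂ) :
    gammaExt φ x y = (1 / (2 * π)) * Real.log (‖dslope φ y x‖) -
      (1 / (2 * π)) * Real.log (‖1 - φ x * (starRingEnd ℂ) (φ y)‖) := by
  rcases eq_or_ne x y with rfl | hne
  · rw [gammaExt, if_pos rfl, robin, dslope_same]
    congr 2
    have h1 : (1 : ℂ) - φ x * (starRingEnd ℂ) (φ x)
        = ((1 - ‖φ x‖ ^ 2 : ℝ) : ℂ) := by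
      rw [Complex.mul_conj, Complex.normSq_eq_norm_sq]
      push_cast
      ring
    rw [h1, Complex.norm_real, Real.norm_eq_abs, Real.log_abs]
  · rw [gammaExt, if_neg hne, gammaReg, dslope_of_ne φ hne, slope_def_field]
    congr 3
    rw [norm_div]

/-- The extended function `γ_Ω` is differentiable in its first variable on `Ω × Ω`, and
`∇γ̃_Ω(x) = 2 ∇₁γ_Ω(x,x)`. -/
theorem stmt6 (Ω : Set ℂ) (φ : ℂ → ℂ)
    (hopen : IsOpen Ω) (hne : Ω ≠ Set.univ) (h0 : (0 : ℂ) ∈ Ω)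
    (hconn : IsConnected Ω) (hsc : SimplyConnectedSpace ↥Ω)
    (hdiff : DifferentiableOn ℂ φ Ω)
    (hbij : Set.BijOn φ Ω (Metric.ball 0 1))
    (hφ0 : φ 0 = 0) :
    (∀ x ∈ Ω, ∀ y ∈ Ω, DifferentiableAt ℝ (fun x' => gammaExt φ x' y) x) ∧
      (∀ x ∈ Ω, grad (robin φ) x = 2 * grad (fun x' => gammaExt φ x' x) x) := by
  have hinj := hbij.injOn
  have hmaps := hbij.mapsTo
  have habs1 : ∀ z ∈ Ω, ‖φ z‖ < 1 := by
    intro z hz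
    have := hmaps hz
    simpa [Metric.mem_ball, Complex.dist_eq] using this
  -- differentiability of the first log term
  have key1 : ∀ x ∈ Ω, ∀ y ∈ Ω,
      HasFDerivAt (fun z => Real.log (‖dslope φ y z‖))
        (Lmap (deriv (dslope φ y) x / dslope φ y x)) x := by
    intro x hx y hy
    have hΩx := hopen.mem_nhds hx
    have h₁d : HasDerivAt (dslope φ y) (deriv (dslope φ y) x) x :=
      ((dslope_diffOn hopen hdiff hy).differentiableAt hΩx).hasDerivAt
    have h₁0 : dslope φ y x ≠ 0 := by
      rcases eq_or_ne x y with rfl | hne'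
      · rw [dslope_same]
        exact deriv_ne_zero_of_injOn hopen hdiff hinj hx
      · rw [dslope_of_ne φ hne', slope_def_field]
        exact div_ne_zero (sub_ne_zero.2 fun h => hne' (hinj hx hy h)) (sub_ne_zero.2 hne')
    exact hasFDerivAt_log_abs h₁d h₁0
  -- differentiability of the second log term
  have key2 : ∀ x ∈ Ω, ∀ y ∈ Ω,
      HasFDerivAt (fun z => Real.log (‖1 - φ z * (starRingEnd ℂ) (φ y)‖))
        (Lmap ((-(deriv φ x * (starRingEnd ℂ) (φ y))) / (1 - φ x * (starRingEnd ℂ) (φ y)))) x := by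
    intro x hx y hy
    have hΩx := hopen.mem_nhds hx
    have hφd : HasDerivAt φ (deriv φ x) x := (hdiff.differentiableAt hΩx).hasDerivAt
    have h₂d : HasDerivAt (fun z => 1 - φ z * (starRingEnd ℂ) (φ y))
        (-(deriv φ x * (starRingEnd ℂ) (φ y))) x :=
      (hφd.mul_const _).const_sub 1
    have h₂0 : (1 : ℂ) - φ x * (starRingEnd ℂ) (φ y) ≠ 0 := by
      intro h
      have h1 : φ x * (starRingEnd ℂ) (φ y) = 1 := by linear_combination -h
      have h2 := congrArg (‖·‖) h1
      rw [norm_mul, Complex.norm_conj, norm_one] at h2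
      have hax := habs1 x hx
      have hay := habs1 y hy
      nlinarith [norm_nonneg (φ x), norm_nonneg (φ y)]
    exact hasFDerivAt_log_abs h₂d h₂0
  constructor
  · intro x hx y hy
    have hA := key1 x hx y hy
    have hB := key2 x hx y hy
    have hdiff' : DifferentiableAt ℝ (fun z =>
        (1 / (2 * π)) * Real.log (‖dslope φ y z‖) -
        (1 / (2 * π)) * Real.log (‖1 - φ z * (starRingEnd ℂ) (φ y)‖)) x :=
      (hA.differentiableAt.const_mul _).sub (hB.differentiableAt.const_mul _)
    have hfun : (fun x' => gammaExt φ x' y) = fun z =>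
        (1 / (2 * π)) * Real.log (‖dslope φ y z‖) -
        (1 / (2 * π)) * Real.log (‖1 - φ z * (starRingEnd ℂ) (φ y)‖) :=
      funext fun z => gammaExt_eq φ z y
    rw [hfun]
    exact hdiff'
  · intro x hx
    have hΩx := hopen.mem_nhds hx
    have hφd : HasDerivAt φ (deriv φ x) x := (hdiff.differentiableAt hΩx).hasDerivAt
    have hd0 : deriv φ x ≠ 0 := deriv_ne_zero_of_injOn hopen hdiff hinj hx
    have hax : ‖φ x‖ < 1 := habs1 x hx
    have hrpos : (0:ℝ) < 1 - ‖φ x‖ ^ 2 := by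
      nlinarith [norm_nonneg (φ x)]
    -- robin side
    have hφ'd : HasDerivAt (deriv φ) (deriv (deriv φ) x) x :=
      (((hdiff.analyticOnNhd hopen).deriv x hx).differentiableAt).hasDerivAt
    have hR1 := hasFDerivAt_log_abs hφ'd hd0
    have hR2 := hasFDerivAt_log_one_sub_sq_abs hφd hax
    have hRobin : HasFDerivAt (robin φ)
        (Lmap ((1 / (2 * π)) • (deriv (deriv φ) x / deriv φ x -
          (1 - ‖φ x‖ ^ 2 : ℝ)⁻¹ • (-2 * (starRingEnd ℂ) (φ x) * deriv φ x)))) x := by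
      have := hasFDerivAt_combo (1 / (2 * π)) hR1 hR2
      exact this
    -- gamma side
    have hG1 := key1 x hx x hx
    have hG2 := key2 x hx x hx
    have hGamma : HasFDerivAt (fun x' => gammaExt φ x' x)
        (Lmap ((1 / (2 * π)) • (deriv (dslope φ x) x / dslope φ x x -
          (-(deriv φ x * (starRingEnd ℂ) (φ x))) / (1 - φ x * (starRingEnd ℂ) (φ x))))) x := by
      have hfun : (fun x' => gammaExt φ x' x) = fun z =>
          (1 / (2 * π)) * Real.log (‖dslope φ x z‖) -
          (1 / (2 * π)) * Real.log (‖1 - φ z * (starRingEnd ℂ) (φ x)‖) :=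
        funext fun z => gammaExt_eq φ z x
      rw [hfun]
      exact hasFDerivAt_combo (1 / (2 * π)) hG1 hG2
    rw [grad_eq hRobin, grad_eq hGamma]
    have hden : (1 : ℂ) - φ x * (starRingEnd ℂ) (φ x)
        = ((1 - ‖φ x‖ ^ 2 : ℝ) : ℂ) := by
      rw [Complex.mul_conj, Complex.normSq_eq_norm_sq]
      push_cast
      ring
    have h2ψ : deriv (deriv φ) x = 2 * deriv (dslope φ x) x :=
      deriv_deriv_eq_two_mul hopen hdiff hx
    have hwEq : (1 / (2 * π)) • (deriv (deriv φ) x / deriv φ x -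
          (1 - ‖φ x‖ ^ 2 : ℝ)⁻¹ • (-2 * (starRingEnd ℂ) (φ x) * deriv φ x))
        = 2 * ((1 / (2 * π)) • (deriv (dslope φ x) x / dslope φ x x -
          (-(deriv φ x * (starRingEnd ℂ) (φ x))) / (1 - φ x * (starRingEnd ℂ) (φ x)))) := by
      rw [hden, dslope_same, h2ψ]
      rw [Complex.real_smul, Complex.real_smul, Complex.real_smul]
      have hrC : ((1 - ‖φ x‖ ^ 2 : ℝ) : ℂ) ≠ 0 :=
        Complex.ofReal_ne_zero.2 (ne_of_gt hrpos)
      push_cast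
      field_simp
    rw [hwEq, map_mul, Complex.conj_ofNat]
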